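/- Let I ∈ ℍ satisfy re(I) = 0 and ‖I‖ = 1, let ℂ_I = ℝ·1 + ℝ·I, and let π_I : ℍ → ℂ_I be the orthogonal projection with respect to the Euclidean inner product ⟨a,b⟩ = re(a · star b). For f = ∑ₖ aₖXᵏ ∈ ℍ[X] write f_I = ∑ₖ π_I(aₖ)Xᵏ and f_I^⊥ = ∑ₖ (aₖ − π_I(aₖ))Xᵏ. Then for every λ ∈ ℂ_I: f_I(λ) ∈ ℂ_I and f_I^⊥(λ) is orthogonal to ℂ_I; consequently f(λ) = 0 if and only if f_I(λ) = 0 and f_I^⊥(λ) = 0. -/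

import Mathlib

open Polynomial

noncomputable section

/-- The real subalgebra `ℂ_I = ℝ·1 + ℝ·I` of `ℍ`, as an `ℝ`-submodule. -/
def CI (I : Quaternion ℝ) : Submodule ℝ (Quaternion ℝ) :=
  Submodule.span ℝ {1, I}

/-- The orthogonal projection `π_I : ℍ → ℂ_I` (with respect to the Euclidean
inner product `⟨a,b⟩ = re (a · star b)`), viewed as a map `ℍ → ℍ`. -/
def piI (I : Quaternion ℝ) (a : Quaternion ℝ) : Quaternion ℝ :=
  ((CI I).orthogonalProjectionOnto a : Quaternion ℝ)

/-- `f_I = ∑ₖ π_I(aₖ) Xᵏ`, the projection of the coefficients of `f` onto `ℂ_I`. -/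
def polyProj (I : Quaternion ℝ) (f : Polynomial (Quaternion ℝ)) :
    Polynomial (Quaternion ℝ) :=
  f.sum fun k a => C (piI I a) * X ^ k

/-- `f_I^⊥ = ∑ₖ (aₖ − π_I(aₖ)) Xᵏ`, the orthogonal component of `f`. -/
def polyProjPerp (I : Quaternion ℝ) (f : Polynomial (Quaternion ℝ)) :
    Polynomial (Quaternion ℝ) :=
  f.sum fun k a => C (a - piI I a) * X ^ k

lemma I_mul_I (I : Quaternion ℝ) (hre : I.re = 0) (hnorm : ‖I‖ = 1) :
    I * I = -1 := by
  have hs : star I = -I := by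
    ext <;> simp [hre]
  have h1 : (Quaternion.normSq I : ℝ) = 1 := by
    have := Quaternion.normSq_eq_norm_mul_self I
    rw [hnorm] at this; simpa using this
  have h2 : I * star I = ((Quaternion.normSq I : ℝ) : Quaternion ℝ) :=
    Quaternion.self_mul_star I
  rw [hs, h1, mul_neg] at h2
  have := congrArg Neg.neg h2
  simpa using this

lemma CI_mul_mem (I : Quaternion ℝ) (hre : I.re = 0) (hnorm : ‖I‖ = 1)
    {x y : Quaternion ℝ} (hx : x ∈ CI I) (hy : y ∈ CI I) : x * y ∈ CI I := by
  have hII := I_mul_I I hre hnorm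
  have h1 : (1 : Quaternion ℝ) ∈ CI I :=
    Submodule.subset_span (by simp)
  have hI : I ∈ CI I := Submodule.subset_span (by simp)
  induction hx using Submodule.span_induction with
  | mem z hz =>
    rcases hz with hz | hz <;> subst hz
    · simpa using hy
    · induction hy using Submodule.span_induction with
      | mem w hw =>
        rcases hw with hw | hw <;> subst hw
        · simpa using hI
        · rw [hII]; exact neg_mem h1
      | zero => simp
      | add a b _ _ ha hb => rw [mul_add]; exact add_mem ha hb
      | smul r a _ ha => rw [mul_smul_comm]; exact Submodule.smul_mem _ _ ha
  | zero => simp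
  | add a b _ _ ha hb => rw [add_mul]; exact add_mem ha hb
  | smul r a _ ha => rw [smul_mul_assoc]; exact Submodule.smul_mem _ _ ha

lemma CI_star_mem (I : Quaternion ℝ) (hre : I.re = 0)
    {x : Quaternion ℝ} (hx : x ∈ CI I) : star x ∈ CI I := by
  have hI : I ∈ CI I := Submodule.subset_span (by simp)
  have hsI : star I = -I := by ext <;> simp [hre]
  induction hx using Submodule.span_induction with
  | mem z hz =>
    rcases hz with hz | hz <;> subst hz
    · simpa [CI] using Submodule.subset_span (s := {1, I}) (by simp)
    · rw [hsI]; exact neg_mem hI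
  | zero => simp
  | add a b _ _ ha hb => rw [star_add]; exact add_mem ha hb
  | smul r a _ ha =>
      rw [show star (r • a) = r • star a by ext <;> simp]
      exact Submodule.smul_mem _ r ha

lemma perp_mul_mem (I : Quaternion ℝ) (hre : I.re = 0) (hnorm : ‖I‖ = 1)
    {x y : Quaternion ℝ} (hx : x ∈ (CI I)ᗮ) (hy : y ∈ CI I) :
    x * y ∈ (CI I)ᗮ := by
  intro c hc
  have hm : y * star c ∈ CI I :=
    CI_mul_mem I hre hnorm hy (CI_star_mem I hre hc)
  have := hx (star (y * star c)) (CI_star_mem I hre hm)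
  rw [real_inner_comm] at this ⊢
  rw [Quaternion.inner_def] at this ⊢
  simpa [mul_assoc] using this

theorem eval_proj_decomposition
    (I : Quaternion ℝ) (hre : I.re = 0) (hnorm : ‖I‖ = 1)
    (f : Polynomial (Quaternion ℝ)) (lam : Quaternion ℝ) (hlam : lam ∈ CI I) :
    Polynomial.eval lam (polyProj I f) ∈ CI I ∧
    Polynomial.eval lam (polyProjPerp I f) ∈ (CI I)ᗮ ∧
    (Polynomial.eval lam f = 0 ↔
      Polynomial.eval lam (polyProj I f) = 0 ∧
        Polynomial.eval lam (polyProjPerp I f) = 0) := by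
  have hpow : ∀ k : ℕ, lam ^ k ∈ CI I := by
    intro k
    induction k with
    | zero => simpa [CI] using Submodule.subset_span (s := ({1, I} : Set (Quaternion ℝ))) (by simp)
    | succ n ih => rw [pow_succ]; exact CI_mul_mem I hre hnorm ih hlam
  have hevalProj : Polynomial.eval lam (polyProj I f) =
      f.sum fun k a => piI I a * lam ^ k := by
    rw [polyProj, Polynomial.sum_def, Polynomial.eval_finset_sum, Polynomial.sum_def]
    simp
  have hevalPerp : Polynomial.eval lam (polyProjPerp I f) =
      f.sum fun k a => (a - piI I a) * lam ^ k := by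
    rw [polyProjPerp, Polynomial.sum_def, Polynomial.eval_finset_sum, Polynomial.sum_def]
    simp
  have h1 : Polynomial.eval lam (polyProj I f) ∈ CI I := by
    rw [hevalProj, Polynomial.sum_def]
    refine Submodule.sum_mem _ fun k _ => ?_
    exact CI_mul_mem I hre hnorm (SetLike.coe_mem _) (hpow k)
  have h2 : Polynomial.eval lam (polyProjPerp I f) ∈ (CI I)ᗮ := by
    rw [hevalPerp, Polynomial.sum_def]
    refine Submodule.sum_mem _ fun k _ => ?_
    exact perp_mul_mem I hre hnorm (Submodule.sub_starProjection_mem_orthogonal (K := CI I) _) (hpow k)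
  have hsum : Polynomial.eval lam f =
      Polynomial.eval lam (polyProj I f) + Polynomial.eval lam (polyProjPerp I f) := by
    rw [hevalProj, hevalPerp, Polynomial.sum_def, Polynomial.sum_def, ← Finset.sum_add_distrib]
    conv_lhs => rw [f.as_sum_support]
    rw [Polynomial.eval_finset_sum]
    refine Finset.sum_congr rfl fun k _ => ?_
    rw [← add_mul]
    simp [Polynomial.eval_monomial]
  refine ⟨h1, h2, ?_⟩
  constructor
  · intro h0
    rw [hsum] at h0
    have heq : Polynomial.eval lam (polyProj I f) = -Polynomial.eval lam (polyProjPerp I f) :=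
      eq_neg_of_add_eq_zero_left h0
    have hmem : Polynomial.eval lam (polyProj I f) ∈ CI I ⊓ (CI I)ᗮ :=
      ⟨h1, heq ▸ neg_mem h2⟩
    rw [Submodule.inf_orthogonal_eq_bot, Submodule.mem_bot] at hmem
    refine ⟨hmem, ?_⟩
    rw [hmem] at heq
    exact neg_eq_zero.mp heq.symm
  · rintro ⟨ha, hb⟩
    rw [hsum, ha, hb, add_zero]
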